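/- Mehta's Gaussian integral (normalization constant of the GUE eigenvalue density): for every integer n ≥ 1, ∫_{ℝ^n} Δ_n(x)² ∏_{j=1}^n e^{−x_j²/2} dx = (2π)^{n/2} · ∏_{k=1}^n k!. -/

import Mathlib

open MeasureTheory

/-- The Vandermonde product `Δ_n(x) = ∏_{1 ≤ i < j ≤ n} (x_j - x_i)`. -/
noncomputable def vanProd (n : ℕ) (x : Fin n → ℝ) : ℝ :=
  ∏ p ∈ Finset.univ.filter (fun p : Fin n × Fin n => p.1 < p.2), (x p.2 - x p.1)

open Polynomial Finset Real Nat

namespace Mehta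

/-- The monic (probabilist) Hermite polynomials, over `ℝ`. -/
noncomputable def H (k : ℕ) : ℝ[X] := (hermite k).map (Int.castRingHom ℝ)

lemma H_monic (k : ℕ) : (H k).Monic := (hermite_monic k).map _

lemma H_natDegree (k : ℕ) : (H k).natDegree = k := by
  rw [H, (hermite_monic k).natDegree_map, natDegree_hermite]

lemma H_zero : H 0 = 1 := by simp [H, hermite_zero]

lemma H_succ (k : ℕ) : H (k + 1) = X * H k - derivative (H k) := by
  rw [H, hermite_succ, Polynomial.map_sub, Polynomial.map_mul, map_X, ← derivative_map]; rfl

/-- The Gaussian weight. -/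
noncomputable def w (t : ℝ) : ℝ := Real.exp (-(t ^ 2 / 2))

lemma pow_le_factorial_mul_exp (n : ℕ) {x : ℝ} (hx : 0 ≤ x) :
    x ^ n ≤ (n ! : ℝ) * Real.exp x := by
  have h := Real.sum_le_exp_of_nonneg hx (n + 1)
  have h2 : x ^ n / (n ! : ℝ) ≤ ∑ i ∈ Finset.range (n + 1), x ^ i / (i ! : ℝ) :=
    Finset.single_le_sum (f := fun i => x ^ i / (i ! : ℝ))
      (fun i _ => by positivity) (Finset.self_mem_range_succ n)
  have hn : (0:ℝ) < (n ! : ℝ) := by positivity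
  have := h2.trans h
  calc x ^ n = (x ^ n / (n ! : ℝ)) * (n ! : ℝ) := by field_simp
  _ ≤ Real.exp x * (n ! : ℝ) := by nlinarith
  _ = (n ! : ℝ) * Real.exp x := mul_comm _ _

lemma integrable_pow_gaussian (n : ℕ) :
    Integrable fun x : ℝ => x ^ n * w x := by
  have hg : Integrable fun x : ℝ => ((1:ℝ) + 4 ^ n * (n ! : ℝ)) * Real.exp (-(1/4) * x ^ 2) :=
    (integrable_exp_neg_mul_sq (by norm_num)).const_mul _
  refine hg.mono' (Continuous.aestronglyMeasurable (by unfold w; continuity)) ?_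
  filter_upwards with x
  have hb : |x| ^ n ≤ 1 + x ^ (2 * n) := by
    rcases le_total (|x|) 1 with h | h
    · have := pow_le_one₀ (abs_nonneg x) h (n := n)
      have h2 : (0:ℝ) ≤ x ^ (2*n) := by rw [pow_mul]; positivity
      linarith
    · have h1 : |x| ^ n ≤ |x| ^ (2 * n) := pow_le_pow_right₀ h (by omega)
      have h2 : |x| ^ (2*n) = x ^ (2*n) := by
        rw [← abs_pow, abs_of_nonneg (by rw [pow_mul]; positivity)]
      linarith [h1.trans_eq h2]
  have hkey : x ^ (2*n) ≤ 4 ^ n * (n ! : ℝ) * Real.exp (x^2/4) := by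
    have h := pow_le_factorial_mul_exp n (x := x^2/4) (by positivity)
    have h4 : (0:ℝ) < 4 ^ n := by positivity
    calc x ^ (2*n) = 4 ^ n * (x^2/4) ^ n := by
          rw [div_pow, pow_mul]
          field_simp
    _ ≤ 4 ^ n * ((n ! : ℝ) * Real.exp (x^2/4)) := by nlinarith
    _ = 4 ^ n * (n ! : ℝ) * Real.exp (x^2/4) := by ring
  have hwx : w x = Real.exp (-(x^2/2)) := rfl
  have hew : Real.exp (-(x^2/2)) ≤ Real.exp (-(1/4) * x^2) := by
    apply Real.exp_le_exp.2; nlinarith [sq_nonneg x]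
  have hprod : Real.exp (x^2/4) * Real.exp (-(x^2/2)) = Real.exp (-(1/4)*x^2) := by
    rw [← Real.exp_add]; ring_nf
  have hwpos : 0 < Real.exp (-(x^2/2)) := Real.exp_pos _
  have hxp : (0:ℝ) ≤ x ^ (2*n) := by rw [pow_mul]; positivity
  rw [Real.norm_eq_abs, abs_mul, abs_pow, hwx, abs_of_pos hwpos]
  calc |x| ^ n * Real.exp (-(x^2/2)) ≤ (1 + x ^ (2*n)) * Real.exp (-(x^2/2)) := by nlinarith
  _ = Real.exp (-(x^2/2)) + x^(2*n) * Real.exp (-(x^2/2)) := by ring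
  _ ≤ Real.exp (-(1/4)*x^2) + (4 ^ n * (n ! : ℝ)) * (Real.exp (x^2/4) * Real.exp (-(x^2/2))) := by
      nlinarith
  _ = (1 + 4 ^ n * (n ! : ℝ)) * Real.exp (-(1/4) * x^2) := by rw [hprod]; ring

lemma integrable_poly_gaussian (P : ℝ[X]) :
    Integrable fun x : ℝ => P.eval x * w x := by
  have : (fun x : ℝ => P.eval x * w x)
      = fun x => ∑ i ∈ Finset.range (P.natDegree + 1), P.coeff i * (x ^ i * w x) := by
    funext x
    rw [Polynomial.eval_eq_sum_range, Finset.sum_mul]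
    simp [mul_assoc]
  rw [this]
  exact integrable_finset_sum _ (fun i _ => (integrable_pow_gaussian i).const_mul _)

lemma integrable_PQw (P Q : ℝ[X]) : Integrable fun t : ℝ => P.eval t * (Q.eval t * w t) := by
  have := integrable_poly_gaussian (P * Q)
  simpa [Polynomial.eval_mul, mul_assoc] using this

lemma hasDerivAt_w (x : ℝ) : HasDerivAt w (w x * -x) x := by
  have h1 : HasDerivAt (fun t : ℝ => t ^ 2) (2 * x) x := by simpa using hasDerivAt_pow 2 x
  have h2 : HasDerivAt (fun t : ℝ => -(t ^ 2 / 2)) (-x) x := by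
    have := (h1.div_const 2).neg
    have e : (2 * x / 2) = x := by ring
    rw [e] at this
    exact this
  show HasDerivAt (fun t => Real.exp (-(t ^ 2 / 2))) _ x
  simpa [w, mul_comm] using h2.exp

lemma hasDerivAt_Hw (k : ℕ) (x : ℝ) :
    HasDerivAt (fun t => (H k).eval t * w t) (-((H (k + 1)).eval x * w x)) x := by
  have h := ((H k).hasDerivAt x).mul (hasDerivAt_w x)
  refine h.congr_deriv ?_
  simp [H_succ, w]
  ring

lemma ibp (P : ℝ[X]) (k : ℕ) :
    ∫ x, P.eval x * ((H (k + 1)).eval x * w x)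
      = ∫ x, (derivative P).eval x * ((H k).eval x * w x) := by
  have hv : ∀ x, HasDerivAt (fun t => -((H k).eval t * w t)) ((H (k + 1)).eval x * w x) x := by
    intro x
    have := (hasDerivAt_Hw k x).neg
    rw [neg_neg] at this
    exact this
  have h := integral_mul_deriv_eq_deriv_mul_of_integrable
    (u := fun t => P.eval t) (u' := fun t => (derivative P).eval t)
    (v := fun t => -((H k).eval t * w t)) (v' := fun t => (H (k + 1)).eval t * w t)
    (fun x _ => P.hasDerivAt x) (fun x _ => hv x)
    (by simpa [Pi.mul_def] using integrable_PQw P (H (k + 1)))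
    (by simpa [Pi.mul_def, eval_neg, neg_mul, mul_neg] using
          integrable_PQw (-(derivative P)) (H k))
    (by simpa [Pi.mul_def, eval_neg, neg_mul, mul_neg] using integrable_PQw (-P) (H k))
  rw [h]
  simp only [mul_neg, integral_neg, neg_neg]

lemma integral_iter (P : ℝ[X]) (k : ℕ) :
    ∫ x, P.eval x * ((H k).eval x * w x) = ∫ x, (derivative^[k] P).eval x * w x := by
  induction k generalizing P with
  | zero => simp [H_zero]
  | succ k ih => rw [ibp P k, ih (derivative P), ← Function.iterate_succ_apply]

lemma integral_w : ∫ x : ℝ, w x = Real.sqrt (2 * Real.pi) := by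
  have h := integral_gaussian (1/2)
  have h2 : (fun x : ℝ => Real.exp (-(1/2 : ℝ) * x ^ 2)) = w := by
    funext x; unfold w; ring_nf
  rw [h2] at h
  rw [h]
  congr 1
  ring

lemma ortho_le {j k : ℕ} (h : j ≤ k) :
    ∫ x, (H j).eval x * ((H k).eval x * w x)
      = if j = k then (k ! : ℝ) * Real.sqrt (2 * Real.pi) else 0 := by
  rw [integral_iter (H j) k]
  rcases lt_or_eq_of_le h with hlt | rfl
  · rw [if_neg hlt.ne]
    rw [iterate_derivative_eq_zero (by rw [H_natDegree]; exact hlt)]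
    simp
  · rw [if_pos rfl]
    have hd : (derivative^[j] (H j)).natDegree ≤ 0 := by
      have := natDegree_iterate_derivative (H j) j
      simpa [H_natDegree] using this
    have hc : (derivative^[j] (H j)).coeff 0 = (j ! : ℝ) := by
      rw [coeff_iterate_derivative]
      have : (H j).coeff (0 + j) = 1 := by
        have := (H_monic j).leadingCoeff
        rwa [Polynomial.leadingCoeff, H_natDegree, zero_add] at *
      rw [this]
      simp [Nat.descFactorial_self]
    rw [eq_C_of_natDegree_le_zero hd, hc]
    simp only [eval_C]
    rw [integral_const_mul, integral_w]

lemma ortho (j k : ℕ) :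
    ∫ x, (H j).eval x * ((H k).eval x * w x)
      = if j = k then (k ! : ℝ) * Real.sqrt (2 * Real.pi) else 0 := by
  rcases le_total j k with h | h
  · exact ortho_le h
  · have hcomm : (fun x => (H j).eval x * ((H k).eval x * w x))
        = fun x => (H k).eval x * ((H j).eval x * w x) := by
      funext x; ring
    rw [hcomm, ortho_le h]
    rcases eq_or_ne j k with rfl | hne
    · simp
    · rw [if_neg (Ne.symm hne), if_neg hne]

lemma vanProd_eq (n : ℕ) (x : Fin n → ℝ) :
    vanProd n x = ∏ i : Fin n, ∏ j ∈ Finset.Ioi i, (x j - x i) := by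
  rw [vanProd, Finset.prod_filter, Fintype.prod_prod_type]
  refine Finset.prod_congr rfl fun i _ => ?_
  rw [← Finset.prod_filter]
  congr 1
  ext j; simp

lemma vanProd_eq_det (n : ℕ) (x : Fin n → ℝ) :
    vanProd n x = Matrix.det (Matrix.of fun i j : Fin n => (H (i : ℕ)).eval (x j)) := by
  rw [vanProd_eq, ← Matrix.det_vandermonde,
    Matrix.det_eval_matrixOfPolynomials_eq_det_vandermonde x (fun i => H (i : ℕ))
      (fun i => H_natDegree i) (fun i => H_monic i), ← Matrix.det_transpose]
  rfl

lemma fact_prod (n : ℕ) : (n ! : ℕ) * ∏ i : Fin n, (i : ℕ)! = ∏ k ∈ Icc 1 n, k ! := by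
  induction n with
  | zero => simp
  | succ n ih =>
    rw [Fin.prod_univ_castSucc]
    simp only [Fin.coe_castSucc, Fin.val_last]
    rw [Finset.prod_Icc_succ_top (by omega : 1 ≤ n + 1), ← ih, factorial_succ]
    ring

lemma sqrt_pow (n : ℕ) : Real.sqrt (2 * Real.pi) ^ n = (2 * Real.pi) ^ ((n : ℝ) / 2) := by
  rw [Real.sqrt_eq_rpow, ← Real.rpow_natCast ((2 * Real.pi) ^ ((1:ℝ)/2)) n,
    ← Real.rpow_mul (by positivity)]
  congr 1
  ring

end Mehta

open Mehta Equiv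

/-- **Mehta's Gaussian integral** (normalization constant of the GUE eigenvalue density):
for every `n ≥ 1`,
`∫_{ℝ^n} Δ_n(x)² ∏_{j=1}^n e^{-x_j²/2} dx = (2π)^{n/2} · ∏_{k=1}^n k!`. -/
theorem mehta_integral (n : ℕ) (hn : 1 ≤ n) :
    ∫ x : Fin n → ℝ, vanProd n x ^ 2 * ∏ j, Real.exp (-(x j) ^ 2 / 2)
      = (2 * Real.pi) ^ ((n : ℝ) / 2) * ∏ k ∈ Finset.Icc 1 n, (Nat.factorial k : ℝ) := by
  classical
  set ε : Equiv.Perm (Fin n) → ℝ := fun σ => ((Equiv.Perm.sign σ : ℤ) : ℝ) with hε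
  have hprod3 : ∀ (A B W : Fin n → ℝ),
      (∏ j, A j) * (∏ j, B j) * (∏ j, W j) = ∏ j, A j * (B j * W j) := by
    intro A B W
    rw [← Finset.prod_mul_distrib, ← Finset.prod_mul_distrib]
    exact Finset.prod_congr rfl fun j _ => by ring
  have hint : ∀ x : Fin n → ℝ,
      vanProd n x ^ 2 * ∏ j, Real.exp (-(x j) ^ 2 / 2)
        = ∑ σ : Perm (Fin n), ∑ τ : Perm (Fin n), (ε σ * ε τ) *
            ∏ j, ((H (σ j : ℕ)).eval (x j) * ((H (τ j : ℕ)).eval (x j) * w (x j))) := by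
    intro x
    have hw : ∀ j, Real.exp (-(x j) ^ 2 / 2) = w (x j) := by
      intro j; rw [w, neg_div]
    rw [vanProd_eq_det, Matrix.det_apply']
    simp only [Matrix.of_apply]
    rw [sq, Finset.sum_mul_sum]
    rw [Finset.sum_mul]
    refine Finset.sum_congr rfl fun σ _ => ?_
    rw [Finset.sum_mul]
    refine Finset.sum_congr rfl fun τ _ => ?_
    simp only [hw]
    rw [← hprod3]
    ring
  calc ∫ x : Fin n → ℝ, vanProd n x ^ 2 * ∏ j, Real.exp (-(x j) ^ 2 / 2)
      = ∫ x : Fin n → ℝ, ∑ σ : Perm (Fin n), ∑ τ : Perm (Fin n), (ε σ * ε τ) *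
            ∏ j, ((H (σ j : ℕ)).eval (x j) * ((H (τ j : ℕ)).eval (x j) * w (x j))) := by
        exact integral_congr_ae (Filter.Eventually.of_forall hint)
    _ = ∑ σ : Perm (Fin n), ∑ τ : Perm (Fin n), (ε σ * ε τ) *
            ∏ j, ∫ t : ℝ, (H (σ j : ℕ)).eval t * ((H (τ j : ℕ)).eval t * w t) := by
        rw [integral_finset_sum _ (fun σ _ => integrable_finset_sum _ fun τ _ =>
          (Integrable.fintype_prod (f := fun j t =>
            (H (σ j : ℕ)).eval t * ((H (τ j : ℕ)).eval t * w t))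
            (fun j => integrable_PQw _ _)).const_mul _)]
        refine Finset.sum_congr rfl fun σ _ => ?_
        rw [integral_finset_sum _ (fun τ _ =>
          (Integrable.fintype_prod (f := fun j t =>
            (H (σ j : ℕ)).eval t * ((H (τ j : ℕ)).eval t * w t))
            (fun j => integrable_PQw _ _)).const_mul _)]
        refine Finset.sum_congr rfl fun τ _ => ?_
        rw [integral_const_mul]
        exact congrArg (ε σ * ε τ * ·) (integral_fintype_prod_eq_prod (ι := Fin n) (E := fun _ => ℝ) (μ := fun _ => volume)
          (fun j t => (H (σ j : ℕ)).eval t * ((H (τ j : ℕ)).eval t * w t)))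
    _ = ∑ σ : Perm (Fin n), (∏ i : Fin n, ((i : ℕ)! : ℝ)) * Real.sqrt (2 * Real.pi) ^ n := by
        refine Finset.sum_congr rfl fun σ _ => ?_
        rw [Finset.sum_eq_single_of_mem σ (Finset.mem_univ σ)]
        · have hd : ∀ j : Fin n, (∫ t : ℝ, (H (σ j : ℕ)).eval t * ((H (σ j : ℕ)).eval t * w t))
              = ((σ j : ℕ)! : ℝ) * Real.sqrt (2 * Real.pi) := by
            intro j; rw [ortho, if_pos rfl]
          simp only [hd]
          rw [Finset.prod_mul_distrib, Finset.prod_const, Finset.card_univ, Fintype.card_fin]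
          have hsign : ε σ * ε σ = 1 := by
            rcases Int.units_eq_one_or (Equiv.Perm.sign σ) with h | h <;> simp [hε, h]
          rw [hsign, one_mul, Equiv.prod_comp σ (fun i : Fin n => ((i : ℕ)! : ℝ))]
        · intro τ _ hτ
          have : ∃ j, σ j ≠ τ j := by
            by_contra h
            push_neg at h
            exact hτ (Equiv.ext h).symm
          obtain ⟨j, hj⟩ := this
          have hz : (∫ t : ℝ, (H (σ j : ℕ)).eval t * ((H (τ j : ℕ)).eval t * w t)) = 0 := by
            rw [ortho, if_neg (by simpa [Fin.val_inj] using hj)]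
          rw [Finset.prod_eq_zero (Finset.mem_univ j) hz, mul_zero]
    _ = (2 * Real.pi) ^ ((n : ℝ) / 2) * ∏ k ∈ Finset.Icc 1 n, (Nat.factorial k : ℝ) := by
        rw [Finset.sum_const, Finset.card_univ, Fintype.card_perm, nsmul_eq_mul, Fintype.card_fin]
        rw [sqrt_pow]
        have := fact_prod n
        have hcast : ((n ! : ℕ) : ℝ) * ∏ i : Fin n, ((i : ℕ)! : ℝ)
            = ∏ k ∈ Icc 1 n, (k ! : ℝ) := by
          exact_mod_cast congrArg (fun m : ℕ => (m : ℝ)) this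
        calc (n ! : ℝ) * ((∏ i : Fin n, ((i : ℕ)! : ℝ)) * (2 * Real.pi) ^ ((n : ℝ) / 2))
            = (2 * Real.pi) ^ ((n : ℝ) / 2) * (((n ! : ℕ) : ℝ) * ∏ i : Fin n, ((i : ℕ)! : ℝ)) := by
              ring
          _ = _ := by rw [hcast]
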